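/- For every real number α ≥ 0 and all integers s ≥ 1 and x ≥ 1, S_{8,s,x}^{(α)} = ∑_{p=0}^{s} ∑_{u=0}^{s} ∑_{w=0}^{s} ∑_{k=1}^{x+1} ( C_{82,s}(x,k;w,p,u) − C_{83,s}(x,k;w,p,u) ) · σ_{w+α−1−u, p+2}(k), where S_{8,s,x}^{(α)} is the coefficient of q^x in ∑_{i=1}^{x+1} i^{α−1} · Σ_{8,s}(q,i). -/

import Mathlib

open PowerSeries Finset

/-- Generalized sum-of-divisors function `σ_α(n) = ∑_{d ∣ n} d^α` (real powers). -/
noncomputable def sigma' (α : ℝ) (n : ℕ) : ℝ := ∑ d ∈ n.divisors, (d : ℝ) ^ α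

/-- Bounded-divisor sum `σ_{α,m}(n) = ∑_{d ∣ n, d ≤ ⌊n/m⌋} d^α`. -/
noncomputable def sigmaB (α : ℝ) (m n : ℕ) : ℝ :=
  ∑ d ∈ n.divisors.filter (fun d => d ≤ n / m), (d : ℝ) ^ α

/-- Binomial-convolution divisor sum
`B_{k,m}(β; n) = ∑_{d ∣ n, d ≤ ⌊n/m⌋} C(n/d - m + k, k) d^β`. -/
noncomputable def Bfun (k m : ℕ) (β : ℝ) (n : ℕ) : ℝ :=
  ∑ d ∈ n.divisors.filter (fun d => d ≤ n / m),
    ((n / d - m + k).choose k : ℝ) * (d : ℝ) ^ β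

/-- Unsigned Stirling numbers of the first kind. -/
def stirling1 : ℕ → ℕ → ℕ
  | 0, 0 => 1
  | 0, _ + 1 => 0
  | _ + 1, 0 => 0
  | s + 1, m + 1 => s * stirling1 s (m + 1) + stirling1 s m

/-- Stirling numbers of the second kind. -/
def stirling2 : ℕ → ℕ → ℕ
  | 0, 0 => 1
  | 0, _ + 1 => 0
  | _ + 1, 0 => 0
  | m + 1, k + 1 => (k + 1) * stirling2 m (k + 1) + stirling2 m k

/-- Binomial coefficient `C(z, j) = z(z-1)⋯(z-j+1)/j!` with integer top argument. -/
noncomputable def zchoose (z : ℤ) (j : ℕ) : ℝ :=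
  (∏ i ∈ Finset.range j, ((z : ℝ) - (i : ℝ))) / (j.factorial : ℝ)

/-- Binomial coefficient `C(a, b)` with natural top and integer bottom argument,
zero when `b < 0`. -/
noncomputable def nchooseZ (a : ℕ) (b : ℤ) : ℝ :=
  if 0 ≤ b then (a.choose b.toNat : ℝ) else 0

/-- The coefficients `C_{4,s}(r,p,m)`. -/
noncomputable def C4 (s r p m : ℕ) : ℝ :=
  ∑ k ∈ Finset.range (m + 1),
    (s.choose r : ℝ) * (stirling1 (s - r) m : ℝ) * (stirling2 m k : ℝ) *
      zchoose ((s : ℤ) - r - k) p * (-1 : ℝ) ^ ((s : ℤ) - r - k + p) *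
      (k.factorial : ℝ) * (r.factorial : ℝ)

/-- The coefficients `C_{8,s}(r,p,n,w)`. -/
noncomputable def C8 (s r p n w : ℕ) : ℝ :=
  ∑ m ∈ Finset.range (s - r + 1), ∑ k ∈ Finset.range (m + 1),
    ∑ m1 ∈ Finset.range (r + 1 - n + 1), ∑ m2 ∈ Finset.range (n + 1),
      (s.choose r : ℝ) * (stirling1 (s - r) m : ℝ) * (stirling2 m k : ℝ) *
        zchoose ((s : ℤ) - r - k) p * (stirling1 (r + 1 - n) m1 : ℝ) *
        (stirling1 n m2 : ℝ) * nchooseZ m2 ((w : ℤ) - m - m1) *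
        (-1 : ℝ) ^ (s - k + p + n + m1 + m2) * (k.factorial : ℝ) *
        (((n : ℤ) - 2 - r : ℤ) : ℝ) ^ ((m : ℤ) + m1 + m2 - w)

/-- The component power series `Σ_{4,s}(q,i)` (formal power series over `ℝ`). -/
noncomputable def Sigma4 (s i : ℕ) : PowerSeries ℝ :=
  ∑ r ∈ Finset.range (s + 1), ∑ p ∈ Finset.range (s + 1), ∑ m ∈ Finset.range (s + 1),
    PowerSeries.C (C4 s r p m) * X ^ ((p + 1) * i + r) * ((1 - X ^ i)⁻¹) ^ (s - r + 1) *
      (PowerSeries.C ((i : ℝ) ^ (m + 1)) * ((1 - X)⁻¹) ^ (r + 1) -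
        PowerSeries.C (((r : ℝ) + 1) * (i : ℝ) ^ m) * ((1 - X)⁻¹) ^ (r + 2))

/-- The component power series `Σ_{8,s}(q,i)` (formal power series over `ℝ`). -/
noncomputable def Sigma8 (s i : ℕ) : PowerSeries ℝ :=
  ∑ r ∈ Finset.range (s + 1), ∑ p ∈ Finset.range (s + 1),
    ∑ n ∈ Finset.range (r + 2), ∑ w ∈ Finset.range (s + 1),
      PowerSeries.C (C8 s r p n w * (i : ℝ) ^ w) * X ^ ((p + 2) * i + n - 1) *
        ((1 - X ^ i)⁻¹) ^ (s - r + 1) *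
        (PowerSeries.C (r.choose n : ℝ) * ((1 - X)⁻¹) ^ (r + 1) -
          PowerSeries.C ((r + 1).choose n : ℝ) * ((1 - X)⁻¹) ^ (r + 2))

/-- `S_{4,s,x}^{(α)}`: the coefficient of `q^x` in `∑_{i=1}^{max(x,1)} i^{α-1} Σ_{4,s}(q,i)`. -/
noncomputable def S4c (α : ℝ) (s x : ℕ) : ℝ :=
  PowerSeries.coeff x
    (∑ i ∈ Finset.Icc 1 (max x 1), PowerSeries.C ((i : ℝ) ^ (α - 1)) * Sigma4 s i)

/-- `S_{8,s,x}^{(α)}`: the coefficient of `q^x` in `∑_{i=1}^{x+1} i^{α-1} Σ_{8,s}(q,i)`. -/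
noncomputable def S8c (α : ℝ) (s x : ℕ) : ℝ :=
  PowerSeries.coeff x
    (∑ i ∈ Finset.Icc 1 (x + 1), PowerSeries.C ((i : ℝ) ^ (α - 1)) * Sigma8 s i)

/-- The coefficients `C_{82,s}(x,k; w,p,u)`. -/
noncomputable def C82 (s x k w p u : ℕ) : ℝ :=
  ∑ r ∈ Finset.range (s + 1), ∑ n ∈ Finset.range (r + 2),
    ∑ j ∈ Finset.range (s - r + 1),
      zchoose ((x : ℤ) + 1 - n - k + r) r * (r.choose n : ℝ) *
        (stirling1 (s - r) j : ℝ) * (j.choose u : ℝ) * (-1 : ℝ) ^ ((s : ℤ) - r - u) *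
        (((p : ℤ) + 2 - s + r : ℤ) : ℝ) ^ (j - u) * (k : ℝ) ^ u * C8 s r p n w /
        ((s - r).factorial : ℝ)

/-- The coefficients `C_{83,s}(x,k; w,p,u)`. -/
noncomputable def C83 (s x k w p u : ℕ) : ℝ :=
  ∑ r ∈ Finset.range (s + 1), ∑ n ∈ Finset.range (r + 2),
    ∑ j ∈ Finset.range (s - r + 1),
      zchoose ((x : ℤ) + 2 - n - k + r) (r + 1) * ((r + 1).choose n : ℝ) *
        (stirling1 (s - r) j : ℝ) * (j.choose u : ℝ) * (-1 : ℝ) ^ ((s : ℤ) - r - u) *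
        (((p : ℤ) + 2 - s + r : ℤ) : ℝ) ^ (j - u) * (k : ℝ) ^ u * C8 s r p n w /
        ((s - r).factorial : ℝ)


-- ## Auxiliary combinatorial lemmas

lemma stirling1_zero_right : ∀ a : ℕ, 1 ≤ a → stirling1 a 0 = 0
  | _ + 1, _ => rfl

lemma stirling1_eq_zero : ∀ {a m : ℕ}, a < m → stirling1 a m = 0
  | 0, _ + 1, _ => rfl
  | a + 1, m + 1, h => by
    have h1 : a < m + 1 := by omega
    have h2 : a < m := by omega
    show a * stirling1 a (m + 1) + stirling1 a m = 0
    rw [stirling1_eq_zero h1, stirling1_eq_zero h2]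
    simp

lemma cast_prod_sub (n j : ℕ) :
    ∏ i ∈ Finset.range j, ((n : ℝ) - (i : ℝ)) = (n.descFactorial j : ℝ) := by
  induction j with
  | zero => simp
  | succ j ih =>
    rw [Finset.prod_range_succ, ih, Nat.descFactorial_succ, Nat.cast_mul]
    rcases le_or_gt j n with h | h
    · rw [Nat.cast_sub h]; ring
    · rw [Nat.descFactorial_eq_zero_iff_lt.mpr h]; simp

lemma zchoose_of_nonneg {z : ℤ} (hz : 0 ≤ z) (j : ℕ) :
    zchoose z j = (z.toNat.choose j : ℝ) := by
  have hcast : (z : ℝ) = (z.toNat : ℝ) := by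
    rw [← Int.cast_natCast (R := ℝ), Int.toNat_of_nonneg hz]
  unfold zchoose
  rw [hcast, cast_prod_sub, Nat.descFactorial_eq_factorial_mul_choose, Nat.cast_mul]
  field_simp

lemma zchoose_eq_zero {z : ℤ} {j : ℕ} (h0 : 0 ≤ z) (hj : z < j) : zchoose z j = 0 := by
  rw [zchoose_of_nonneg h0, Nat.choose_eq_zero_of_lt (by omega)]
  simp

lemma stirling1_prod (a : ℕ) (y : ℝ) :
    ∑ j ∈ Finset.range (a + 1), (-1 : ℝ) ^ (a - j) * (stirling1 a j : ℝ) * y ^ j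
      = ∏ v ∈ Finset.range a, (y - v) := by
  induction a with
  | zero => simp [stirling1]
  | succ a ih =>
    rw [Finset.prod_range_succ, ← ih, Finset.sum_mul]
    have key : ∀ j ∈ Finset.range (a + 1),
        (-1 : ℝ) ^ (a - j) * (stirling1 a j : ℝ) * y ^ j * (y - a)
          = ((-1 : ℝ) ^ (a - j) * (stirling1 a j : ℝ) * y ^ (j + 1)
              - (a : ℝ) * ((-1 : ℝ) ^ (a - j) * (stirling1 a j : ℝ) * y ^ j)) := by
      intro j _; ring
    rw [Finset.sum_congr rfl key, Finset.sum_sub_distrib]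
    -- LHS target: ∑_{j ∈ range (a+2)} (-1)^(a+1-j) st1(a+1) j y^j
    rw [Finset.sum_range_succ' (fun j => (-1 : ℝ) ^ (a + 1 - j) * (stirling1 (a+1) j : ℝ) * y ^ j)]
    have h0 : (-1 : ℝ) ^ (a + 1 - 0) * (stirling1 (a+1) 0 : ℝ) * y ^ 0 = 0 := by
      rw [stirling1_zero_right (a+1) (by omega)]; simp
    rw [h0, add_zero]
    have hrec : ∀ j ∈ Finset.range (a + 1),
        (-1 : ℝ) ^ (a + 1 - (j + 1)) * (stirling1 (a+1) (j+1) : ℝ) * y ^ (j + 1)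
          = (-1 : ℝ) ^ (a - j) * (stirling1 a j : ℝ) * y ^ (j + 1)
            + (a : ℝ) * ((-1 : ℝ) ^ (a - j) * (stirling1 a (j+1) : ℝ) * y ^ (j + 1)) := by
      intro j _
      have : stirling1 (a+1) (j+1) = a * stirling1 a (j+1) + stirling1 a j := rfl
      rw [this, Nat.succ_sub_succ]
      push_cast
      ring
    rw [Finset.sum_congr rfl hrec, Finset.sum_add_distrib]
    have hshift : ∑ j ∈ Finset.range (a + 1),
        (a : ℝ) * ((-1 : ℝ) ^ (a - j) * (stirling1 a (j+1) : ℝ) * y ^ (j + 1))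
          = - ∑ j ∈ Finset.range (a + 1),
              (a : ℝ) * ((-1 : ℝ) ^ (a - j) * (stirling1 a j : ℝ) * y ^ j) := by
      rcases Nat.eq_zero_or_pos a with ha | ha
      · subst ha; simp [stirling1_eq_zero (by omega : 0 < 1), stirling1]
      · set g : ℕ → ℝ := fun m => (a : ℝ) * ((-1 : ℝ) ^ (a + 1 - m) * (stirling1 a m : ℝ) * y ^ m) with hgdef
        have h1 := Finset.sum_range_succ' g (a + 1)
        have h2 := Finset.sum_range_succ g (a + 1)
        have hga : g (a + 1) = 0 := by
          simp [hgdef, stirling1_eq_zero (Nat.lt_succ_self a)]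
        have hg0 : g 0 = 0 := by
          simp [hgdef, stirling1_zero_right a ha]
        have hL : ∀ j ∈ Finset.range (a+1),
            (a : ℝ) * ((-1 : ℝ) ^ (a - j) * (stirling1 a (j+1) : ℝ) * y ^ (j + 1)) = g (j+1) := by
          intro j _; simp only [hgdef, Nat.succ_sub_succ]
        have hR : ∀ j ∈ Finset.range (a+1),
            g j = - ((a : ℝ) * ((-1 : ℝ) ^ (a - j) * (stirling1 a j : ℝ) * y ^ j)) := by
          intro j hj; simp only [Finset.mem_range] at hj
          have he : a + 1 - j = (a - j) + 1 := by omega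
          simp only [hgdef, he, pow_succ]; ring
        rw [Finset.sum_congr rfl hL]
        have heq : ∑ j ∈ Finset.range (a+1), g (j+1) = ∑ j ∈ Finset.range (a+1), g j := by
          linarith [h1, h2, hga, hg0]
        rw [heq, Finset.sum_congr rfl hR]
        rw [Finset.sum_neg_distrib]
    rw [hshift]
    ring

-- ## Power series coefficient lemmas

lemma one_sub_X_inv : (1 - X : ℝ⟦X⟧)⁻¹ = PowerSeries.mk 1 := by
  rw [PowerSeries.inv_eq_iff_mul_eq_one (by simp)]
  exact mk_one_mul_one_sub_eq_one (S := ℝ)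

lemma coeff_H (b n : ℕ) :
    (coeff n) (((1 - X : ℝ⟦X⟧)⁻¹) ^ (b + 1)) = ((b + n).choose b : ℝ) := by
  rw [one_sub_X_inv, mk_one_pow_eq_mk_choose_add, coeff_mk]

lemma one_sub_X_pow_inv {i : ℕ} (hi : 0 < i) :
    (1 - X ^ i : ℝ⟦X⟧)⁻¹ = mk fun n => if i ∣ n then (1 : ℝ) else 0 := by
  rw [PowerSeries.inv_eq_iff_mul_eq_one (by simp [zero_pow hi.ne'])]
  ext n
  rw [mul_sub, mul_one, map_sub, PowerSeries.coeff_mul_X_pow', coeff_mk, PowerSeries.coeff_one]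
  rcases Nat.eq_zero_or_pos n with hn | hn
  · subst hn
    simp [Nat.not_succ_le_zero, hi.ne']
  · by_cases hin : i ≤ n
    · have hiff : i ∣ n ↔ i ∣ n - i := by
        constructor
        · intro h; exact Nat.dvd_sub h dvd_rfl
        · intro h
          have : n - i + i = n := by omega
          rw [← this]; exact Nat.dvd_add h dvd_rfl
      by_cases hd : i ∣ n
      · simp [hin, hd, hiff.mp hd, hn.ne']
      · have hnd2 : ¬ i ∣ n - i := fun h => hd (hiff.mpr h)
        simp [hin, hd, hnd2, hn.ne']
    · have hnd : ¬ i ∣ n := fun h => hin (Nat.le_of_dvd hn h)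
      simp [hin, hnd, hn.ne']

lemma sum_div_reindex (i M : ℕ) (hi : 0 < i) (f : ℕ → ℝ) :
    ∑ c ∈ Finset.range (M + 1), (if i ∣ c then f (c / i) else 0)
      = ∑ t ∈ Finset.range (M + 1), (if i * t ≤ M then f t else 0) := by
  rw [← Finset.sum_filter, ← Finset.sum_filter]
  refine Finset.sum_nbij' (fun c => c / i) (fun t => i * t) ?_ ?_ ?_ ?_ ?_
  · intro c hc
    simp only [Finset.mem_filter, Finset.mem_range] at *
    obtain ⟨hc1, hc2⟩ := hc
    refine ⟨lt_of_le_of_lt (Nat.div_le_self c i) hc1, ?_⟩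
    rw [Nat.mul_div_cancel' hc2]; omega
  · intro t ht
    simp only [Finset.mem_filter, Finset.mem_range] at *
    exact ⟨by omega, dvd_mul_right i t⟩
  · intro c hc
    simp only [Finset.mem_filter] at hc
    exact Nat.mul_div_cancel' hc.2
  · intro t _
    exact Nat.mul_div_cancel_left t hi
  · intro c _
    rfl

lemma hockey (a T : ℕ) :
    ∑ t ∈ Finset.range (T + 1), (a + t).choose a = (a + 1 + T).choose (a + 1) := by
  induction T with
  | zero => simp
  | succ T ih =>
    rw [Finset.sum_range_succ, ih, show a + 1 + (T + 1) = (a + 1 + T) + 1 by omega,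
      Nat.choose_succ_succ, show a + (T + 1) = a + 1 + T by omega]
    simp only [Nat.succ_eq_add_one]
    omega

lemma coeff_G {i : ℕ} (hi : 0 < i) (a n : ℕ) :
    (coeff n) (((1 - X ^ i : ℝ⟦X⟧)⁻¹) ^ (a + 1))
      = if i ∣ n then ((a + n / i).choose a : ℝ) else 0 := by
  induction a generalizing n with
  | zero =>
    rw [pow_one, one_sub_X_pow_inv hi, coeff_mk]
    split_ifs <;> simp
  | succ a ih =>
    rw [pow_succ, PowerSeries.coeff_mul, Finset.Nat.sum_antidiagonal_eq_sum_range_succ_mk]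
    have hterm : ∀ c ∈ Finset.range (n + 1),
        (coeff c) (((1 - X ^ i : ℝ⟦X⟧)⁻¹) ^ (a + 1))
            * (coeff (n - c)) ((1 - X ^ i : ℝ⟦X⟧)⁻¹)
          = (if i ∣ c then ((a + c / i).choose a : ℝ) else 0)
              * (if i ∣ (n - c) then (1 : ℝ) else 0) := by
      intro c _
      rw [ih c, one_sub_X_pow_inv hi, coeff_mk]
    rw [Finset.sum_congr rfl hterm]
    by_cases hn : i ∣ n
    · have hsimp : ∀ c ∈ Finset.range (n + 1),
          (if i ∣ c then ((a + c / i).choose a : ℝ) else 0)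
              * (if i ∣ (n - c) then (1 : ℝ) else 0)
            = if i ∣ c then (fun t => ((a + t).choose a : ℝ)) (c / i) else 0 := by
        intro c _
        by_cases hic : i ∣ c
        · simp [hic, Nat.dvd_sub hn hic]
        · simp [hic]
      rw [Finset.sum_congr rfl hsimp,
        sum_div_reindex i n hi (fun t => ((a + t).choose a : ℝ)), if_pos hn]
      have hfilter : ∑ t ∈ Finset.range (n + 1),
          (if i * t ≤ n then ((a + t).choose a : ℝ) else 0)
            = ∑ t ∈ Finset.range (n / i + 1), ((a + t).choose a : ℝ) := by
        rw [← Finset.sum_filter]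
        congr 1
        ext t
        simp only [Finset.mem_filter, Finset.mem_range, Nat.lt_succ_iff]
        rw [mul_comm, ← Nat.le_div_iff_mul_le hi]
        constructor
        · rintro ⟨-, h⟩; exact h
        · intro h; exact ⟨le_trans h (Nat.div_le_self n i), h⟩
      rw [hfilter, ← Nat.cast_sum, hockey]
    · rw [if_neg hn]
      refine Finset.sum_eq_zero fun c hc => ?_
      simp only [Finset.mem_range, Nat.lt_succ_iff] at hc
      by_cases hic : i ∣ c
      · have : ¬ i ∣ n - c := by
          intro h
          exact hn (by rw [← Nat.sub_add_cancel hc]; exact Nat.dvd_add h hic)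
        simp [this]
      · simp [hic]

lemma coeff_GH {i : ℕ} (hi : 0 < i) (a b M : ℕ) :
    (coeff M) (((1 - X ^ i : ℝ⟦X⟧)⁻¹) ^ (a + 1) * ((1 - X : ℝ⟦X⟧)⁻¹) ^ (b + 1))
      = ∑ t ∈ Finset.range (M + 1), if i * t ≤ M then
          ((a + t).choose a : ℝ) * ((b + (M - i * t)).choose b : ℝ) else 0 := by
  rw [PowerSeries.coeff_mul, Finset.Nat.sum_antidiagonal_eq_sum_range_succ_mk]
  have hterm : ∀ c ∈ Finset.range (M + 1),
      (coeff c) (((1 - X ^ i : ℝ⟦X⟧)⁻¹) ^ (a + 1))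
          * (coeff (M - c)) (((1 - X : ℝ⟦X⟧)⁻¹) ^ (b + 1))
        = if i ∣ c then
            (fun t => ((a + t).choose a : ℝ) * ((b + (M - i * t)).choose b : ℝ)) (c / i)
          else 0 := by
    intro c _
    rw [coeff_G hi, coeff_H]
    by_cases hic : i ∣ c
    · simp only [hic, if_pos, if_true]
      rw [Nat.mul_div_cancel' hic]
    · simp [hic]
  rw [Finset.sum_congr rfl hterm,
    sum_div_reindex i M hi (fun t => ((a + t).choose a : ℝ) * ((b + (M - i * t)).choose b : ℝ))]

lemma coeff_XGH {i : ℕ} (hi : 0 < i) (e a b x : ℕ) :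
    (coeff x) (((1 - X ^ i : ℝ⟦X⟧)⁻¹) ^ (a + 1) * ((1 - X : ℝ⟦X⟧)⁻¹) ^ (b + 1) * X ^ e)
      = ∑ t ∈ Finset.range (x + 1), if e + i * t ≤ x then
          ((a + t).choose a : ℝ) * ((b + (x - e - i * t)).choose b : ℝ) else 0 := by
  rw [PowerSeries.coeff_mul_X_pow']
  by_cases he : e ≤ x
  · rw [if_pos he, coeff_GH hi a b (x - e)]
    symm
    rw [← Finset.sum_subset (Finset.range_subset_range.mpr (show x - e + 1 ≤ x + 1 by omega))
      (fun t _ ht2 => ?_)]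
    · refine Finset.sum_congr rfl fun t ht => ?_
      have hiff : (e + i * t ≤ x) ↔ (i * t ≤ x - e) := by omega
      have harg : x - e - i * t = x - e - i * t := rfl
      by_cases h : i * t ≤ x - e
      · rw [if_pos h, if_pos (hiff.mpr h)]
      · rw [if_neg h, if_neg (fun hh => h (hiff.mp hh))]
    · simp only [Finset.mem_range] at *
      have hlt : x - e < i * t := lt_of_lt_of_le (by omega) (Nat.le_mul_of_pos_left t hi)
      rw [if_neg (by omega)]
  · rw [if_neg he]
    symm
    exact Finset.sum_eq_zero fun t _ => if_neg (by omega)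

lemma coeff_term {i : ℕ} (hi : 0 < i) (c c1 c2 : ℝ) (e a b x : ℕ) :
    (coeff x) (PowerSeries.C c * X ^ e * ((1 - X ^ i : ℝ⟦X⟧)⁻¹) ^ (a + 1) *
        (PowerSeries.C c1 * ((1 - X : ℝ⟦X⟧)⁻¹) ^ (b + 1) -
         PowerSeries.C c2 * ((1 - X : ℝ⟦X⟧)⁻¹) ^ (b + 2)))
      = ∑ t ∈ Finset.range (x + 1), if e + i * t ≤ x then
            c * ((a + t).choose a : ℝ) *
              (c1 * ((b + (x - e - i * t)).choose b : ℝ)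
               - c2 * ((b + 1 + (x - e - i * t)).choose (b + 1) : ℝ))
          else 0 := by
  have hexp : PowerSeries.C c * X ^ e * ((1 - X ^ i : ℝ⟦X⟧)⁻¹) ^ (a + 1) *
        (PowerSeries.C c1 * ((1 - X : ℝ⟦X⟧)⁻¹) ^ (b + 1) -
         PowerSeries.C c2 * ((1 - X : ℝ⟦X⟧)⁻¹) ^ (b + 2))
      = PowerSeries.C (c * c1) *
          (((1 - X ^ i : ℝ⟦X⟧)⁻¹) ^ (a + 1) * ((1 - X : ℝ⟦X⟧)⁻¹) ^ (b + 1) * X ^ e)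
        - PowerSeries.C (c * c2) *
          (((1 - X ^ i : ℝ⟦X⟧)⁻¹) ^ (a + 1) * ((1 - X : ℝ⟦X⟧)⁻¹) ^ (b + 1 + 1) * X ^ e) := by
    rw [map_mul, map_mul]; ring
  rw [hexp, map_sub, PowerSeries.coeff_C_mul, PowerSeries.coeff_C_mul, coeff_XGH hi,
    coeff_XGH hi e a (b + 1) x, Finset.mul_sum, Finset.mul_sum, ← Finset.sum_sub_distrib]
  refine Finset.sum_congr rfl fun t _ => ?_
  split_ifs with h
  · ring
  · simp

/-- The common kernel. -/
noncomputable def Eker (α : ℝ) (s x p w r n i t : ℕ) : ℝ :=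
  (i : ℝ) ^ (α - 1) * (C8 s r p n w * (i : ℝ) ^ w) * ((s - r + t).choose (s - r) : ℝ) *
    ((r.choose n : ℝ) * ((r + (x - ((p + 2) * i + n - 1) - i * t)).choose r : ℝ)
      - ((r + 1).choose n : ℝ) *
          ((r + 1 + (x - ((p + 2) * i + n - 1) - i * t)).choose (r + 1) : ℝ))

lemma coeff_Ci_Sigma8 {i : ℕ} (hi : 1 ≤ i) (α : ℝ) (s x : ℕ) :
    (coeff x) (PowerSeries.C ((i : ℝ) ^ (α - 1)) * Sigma8 s i)
      = ∑ r ∈ Finset.range (s + 1), ∑ p ∈ Finset.range (s + 1), ∑ n ∈ Finset.range (r + 2),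
          ∑ w ∈ Finset.range (s + 1), ∑ t ∈ Finset.range (x + 1),
            if (p + 2) * i + n - 1 + i * t ≤ x then Eker α s x p w r n i t else 0 := by
  unfold Sigma8
  simp only [Finset.mul_sum, map_sum]
  refine Finset.sum_congr rfl fun r _ => Finset.sum_congr rfl fun p _ =>
    Finset.sum_congr rfl fun n _ => Finset.sum_congr rfl fun w _ => ?_
  have heq : PowerSeries.C ((i : ℝ) ^ (α - 1)) *
      (PowerSeries.C (C8 s r p n w * (i : ℝ) ^ w) * X ^ ((p + 2) * i + n - 1) *
        ((1 - X ^ i : ℝ⟦X⟧)⁻¹) ^ (s - r + 1) *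
        (PowerSeries.C (r.choose n : ℝ) * ((1 - X : ℝ⟦X⟧)⁻¹) ^ (r + 1) -
          PowerSeries.C ((r + 1).choose n : ℝ) * ((1 - X : ℝ⟦X⟧)⁻¹) ^ (r + 2)))
      = PowerSeries.C ((i : ℝ) ^ (α - 1) * (C8 s r p n w * (i : ℝ) ^ w)) *
          X ^ ((p + 2) * i + n - 1) * ((1 - X ^ i : ℝ⟦X⟧)⁻¹) ^ (s - r + 1) *
          (PowerSeries.C (r.choose n : ℝ) * ((1 - X : ℝ⟦X⟧)⁻¹) ^ (r + 1) -
            PowerSeries.C ((r + 1).choose n : ℝ) * ((1 - X : ℝ⟦X⟧)⁻¹) ^ (r + 2)) := by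
    simp only [map_mul]; ring
  rw [heq, coeff_term hi _ _ _ _ _ _ x]
  rfl

lemma LHS_reduce (α : ℝ) (s x : ℕ) :
    S8c α s x
      = ∑ p ∈ Finset.range (s + 1), ∑ w ∈ Finset.range (s + 1), ∑ r ∈ Finset.range (s + 1),
          ∑ n ∈ Finset.range (r + 2), ∑ i ∈ Finset.Icc 1 (x + 1), ∑ t ∈ Finset.range (x + 1),
            if (p + 2) * i + n - 1 + i * t ≤ x then Eker α s x p w r n i t else 0 := by
  unfold S8c
  rw [map_sum]
  rw [Finset.sum_congr rfl fun i hi =>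
    coeff_Ci_Sigma8 (Finset.mem_Icc.mp hi).1 α s x]
  -- current order: i r p n w t ; target: p w r n i t
  rw [Finset.sum_comm]  -- r i p n w
  rw [Finset.sum_congr rfl fun r _ => Finset.sum_comm]  -- r p i n w
  rw [Finset.sum_comm]  -- p r i n w
  rw [Finset.sum_congr rfl fun p _ => Finset.sum_congr rfl fun r _ => Finset.sum_comm]  -- p r n i w
  rw [Finset.sum_congr rfl fun p _ => Finset.sum_congr rfl fun r _ =>
    Finset.sum_congr rfl fun n _ => Finset.sum_comm]  -- p r n w i
  rw [Finset.sum_congr rfl fun p _ => Finset.sum_congr rfl fun r _ => Finset.sum_comm]  -- p r w n i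
  rw [Finset.sum_congr rfl fun p _ => Finset.sum_comm]  -- p w r n i

lemma inner_eval (s r p w k d : ℕ) (α : ℝ) (hr : r ≤ s) (hd : 0 < d) (hdk : d ∣ k)
    (hkd : p + 2 ≤ k / d) :
    ∑ j ∈ Finset.range (s - r + 1), ∑ u ∈ Finset.range (s + 1),
      (stirling1 (s - r) j : ℝ) * (j.choose u : ℝ) * (-1 : ℝ) ^ ((s : ℤ) - r - u) *
        (((p : ℤ) + 2 - s + r : ℤ) : ℝ) ^ (j - u) * (k : ℝ) ^ u *
        (d : ℝ) ^ ((w : ℝ) + α - 1 - u)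
      = (d : ℝ) ^ ((w : ℝ) + α - 1) * ((s - r).factorial : ℝ) *
          ((s - r + (k / d - (p + 2))).choose (s - r) : ℝ) := by
  set a := s - r with ha
  set E : ℝ := (w : ℝ) + α - 1 with hE
  set P : ℝ := (((p : ℤ) + 2 - s + r : ℤ) : ℝ) with hP
  set Q : ℝ := ((k / d : ℕ) : ℝ) with hQ
  have hdR : (0 : ℝ) < (d : ℝ) := by exact_mod_cast hd
  have hQk : (k : ℝ) = Q * (d : ℝ) := by
    rw [hQ, ← Nat.cast_mul, Nat.div_mul_cancel hdk]
  have step1 : ∀ j ∈ Finset.range (a + 1),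
      (∑ u ∈ Finset.range (s + 1),
        (stirling1 a j : ℝ) * (j.choose u : ℝ) * (-1 : ℝ) ^ ((s : ℤ) - r - u) *
          P ^ (j - u) * (k : ℝ) ^ u * (d : ℝ) ^ (E - u))
        = (-1 : ℝ) ^ (a - j) * (stirling1 a j : ℝ) * (Q - P) ^ j * (d : ℝ) ^ E := by
    intro j hj
    have hja : j ≤ a := by simpa [Nat.lt_succ_iff] using hj
    rw [← Finset.sum_subset (Finset.range_subset_range.mpr (show j + 1 ≤ s + 1 by omega))
      (fun u _ hu2 => by
        simp only [Finset.mem_range, Nat.lt_succ_iff, not_le] at hu2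
        rw [Nat.choose_eq_zero_of_lt hu2]
        simp)]
    have hterm : ∀ u ∈ Finset.range (j + 1),
        (stirling1 a j : ℝ) * (j.choose u : ℝ) * (-1 : ℝ) ^ ((s : ℤ) - r - u) *
            P ^ (j - u) * (k : ℝ) ^ u * (d : ℝ) ^ (E - u)
          = ((-1 : ℝ) ^ (a - j) * (stirling1 a j : ℝ) * (d : ℝ) ^ E) *
              (Q ^ u * (-P) ^ (j - u) * (j.choose u : ℝ)) := by
      intro u hu
      have huj : u ≤ j := by simpa [Nat.lt_succ_iff] using hu
      have hsign : (-1 : ℝ) ^ ((s : ℤ) - r - u) = (-1 : ℝ) ^ (a - j) * (-1 : ℝ) ^ (j - u) := by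
        have h1 : (s : ℤ) - r - u = ((a - u : ℕ) : ℤ) := by
          rw [ha]; push_cast [Nat.cast_sub (show u ≤ s - r by omega), Nat.cast_sub hr]; ring
        rw [h1, zpow_natCast, show a - u = (a - j) + (j - u) by omega, pow_add]
      have hpow : (k : ℝ) ^ u * (d : ℝ) ^ (E - u) = (d : ℝ) ^ E * Q ^ u := by
        rw [Real.rpow_sub hdR, Real.rpow_natCast, hQk, mul_pow]
        field_simp
      have hneg : (-1 : ℝ) ^ (j - u) * P ^ (j - u) = (-P) ^ (j - u) := by
        rw [← neg_one_mul P, mul_pow]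
      calc (stirling1 a j : ℝ) * (j.choose u : ℝ) * (-1 : ℝ) ^ ((s : ℤ) - r - u) *
            P ^ (j - u) * (k : ℝ) ^ u * (d : ℝ) ^ (E - u)
          = ((stirling1 a j : ℝ) * (j.choose u : ℝ) * ((-1 : ℝ) ^ (a - j) * (-1 : ℝ) ^ (j - u)) *
              P ^ (j - u)) * ((k : ℝ) ^ u * (d : ℝ) ^ (E - u)) := by rw [hsign]; ring
        _ = ((stirling1 a j : ℝ) * (j.choose u : ℝ) * ((-1 : ℝ) ^ (a - j) * (-1 : ℝ) ^ (j - u)) *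
              P ^ (j - u)) * ((d : ℝ) ^ E * Q ^ u) := by rw [hpow]
        _ = ((-1 : ℝ) ^ (a - j) * (stirling1 a j : ℝ) * (d : ℝ) ^ E) *
              (Q ^ u * (((-1 : ℝ) ^ (j - u) * P ^ (j - u))) * (j.choose u : ℝ)) := by ring
        _ = ((-1 : ℝ) ^ (a - j) * (stirling1 a j : ℝ) * (d : ℝ) ^ E) *
              (Q ^ u * (-P) ^ (j - u) * (j.choose u : ℝ)) := by rw [hneg]
    rw [Finset.sum_congr rfl hterm, ← Finset.mul_sum, ← add_pow]
    rw [← sub_eq_add_neg]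
    ring
  rw [Finset.sum_congr rfl step1]
  have hsum : ∑ j ∈ Finset.range (a + 1),
      (-1 : ℝ) ^ (a - j) * (stirling1 a j : ℝ) * (Q - P) ^ j * (d : ℝ) ^ E
      = (∑ j ∈ Finset.range (a + 1),
          (-1 : ℝ) ^ (a - j) * (stirling1 a j : ℝ) * (Q - P) ^ j) * (d : ℝ) ^ E := by
    rw [Finset.sum_mul]
  rw [hsum, stirling1_prod a (Q - P)]
  have hQP : Q - P = ((a + (k / d - (p + 2)) : ℕ) : ℝ) := by
    rw [hQ, hP, ha]
    push_cast [Nat.cast_sub hkd, Nat.cast_sub hr]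
    ring
  rw [hQP, cast_prod_sub, Nat.descFactorial_eq_factorial_mul_choose]
  push_cast
  ring

lemma reorder_per_k {U R D : Finset ℕ} {N J : ℕ → Finset ℕ} (f : ℕ → ℕ → ℕ → ℕ → ℕ → ℝ) :
    ∑ u ∈ U, ∑ d ∈ D, ∑ r ∈ R, ∑ n ∈ N r, ∑ j ∈ J r, f u d r n j
      = ∑ r ∈ R, ∑ n ∈ N r, ∑ d ∈ D, ∑ j ∈ J r, ∑ u ∈ U, f u d r n j :=
  calc ∑ u ∈ U, ∑ d ∈ D, ∑ r ∈ R, ∑ n ∈ N r, ∑ j ∈ J r, f u d r n j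
      = ∑ d ∈ D, ∑ u ∈ U, ∑ r ∈ R, ∑ n ∈ N r, ∑ j ∈ J r, f u d r n j := Finset.sum_comm
    _ = ∑ d ∈ D, ∑ r ∈ R, ∑ u ∈ U, ∑ n ∈ N r, ∑ j ∈ J r, f u d r n j :=
        Finset.sum_congr rfl fun _ _ => Finset.sum_comm
    _ = ∑ r ∈ R, ∑ d ∈ D, ∑ u ∈ U, ∑ n ∈ N r, ∑ j ∈ J r, f u d r n j := Finset.sum_comm
    _ = ∑ r ∈ R, ∑ d ∈ D, ∑ n ∈ N r, ∑ u ∈ U, ∑ j ∈ J r, f u d r n j :=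
        Finset.sum_congr rfl fun _ _ => Finset.sum_congr rfl fun _ _ => Finset.sum_comm
    _ = ∑ r ∈ R, ∑ n ∈ N r, ∑ d ∈ D, ∑ u ∈ U, ∑ j ∈ J r, f u d r n j :=
        Finset.sum_congr rfl fun _ _ => Finset.sum_comm
    _ = ∑ r ∈ R, ∑ n ∈ N r, ∑ d ∈ D, ∑ j ∈ J r, ∑ u ∈ U, f u d r n j :=
        Finset.sum_congr rfl fun _ _ => Finset.sum_congr rfl fun _ _ =>
          Finset.sum_congr rfl fun _ _ => Finset.sum_comm

lemma per_k (α : ℝ) (s x p w k : ℕ) :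
    ∑ u ∈ Finset.range (s + 1),
        (C82 s x k w p u - C83 s x k w p u) * sigmaB ((w : ℝ) + α - 1 - u) (p + 2) k
      = ∑ r ∈ Finset.range (s + 1), ∑ n ∈ Finset.range (r + 2),
          ∑ d ∈ k.divisors.filter (fun d => d ≤ k / (p + 2)),
            (zchoose ((x : ℤ) + 1 - n - k + r) r * (r.choose n : ℝ)
              - zchoose ((x : ℤ) + 2 - n - k + r) (r + 1) * ((r + 1).choose n : ℝ))
              * C8 s r p n w * (d : ℝ) ^ ((w : ℝ) + α - 1)
              * ((s - r + (k / d - (p + 2))).choose (s - r) : ℝ) := by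
  unfold C82 C83 sigmaB
  simp only [← Finset.sum_sub_distrib, Finset.sum_mul, Finset.mul_sum]
  rw [reorder_per_k]
  refine Finset.sum_congr rfl fun r hr => Finset.sum_congr rfl fun n _ =>
    Finset.sum_congr rfl fun d hd => ?_
  simp only [Finset.mem_range, Nat.lt_succ_iff] at hr
  simp only [Finset.mem_filter, Nat.mem_divisors] at hd
  obtain ⟨⟨hdk, hk0⟩, hdle⟩ := hd
  have hdpos : 0 < d := Nat.pos_of_dvd_of_pos hdk (Nat.pos_of_ne_zero hk0)
  have hkd : p + 2 ≤ k / d := by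
    rw [Nat.le_div_iff_mul_le hdpos]
    calc (p + 2) * d = d * (p + 2) := by ring
    _ ≤ k := (Nat.le_div_iff_mul_le (by omega : 0 < p + 2)).mp hdle
  have hfa : ((s - r).factorial : ℝ) ≠ 0 := by positivity
  have hcongr : ∀ j ∈ Finset.range (s - r + 1), ∀ u ∈ Finset.range (s + 1),
      ((zchoose ((x : ℤ) + 1 - n - ↑k + ↑r) r * ↑(r.choose n) * ↑(stirling1 (s - r) j) *
          ↑(j.choose u) * (-1 : ℝ) ^ ((s : ℤ) - ↑r - ↑u) * (((p : ℤ) + 2 - ↑s + ↑r : ℤ) : ℝ) ^ (j - u) *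
          (k : ℝ) ^ u * C8 s r p n w / ((s - r).factorial : ℝ)
        - zchoose ((x : ℤ) + 2 - n - ↑k + ↑r) (r + 1) * ↑((r + 1).choose n) *
          ↑(stirling1 (s - r) j) * ↑(j.choose u) * (-1 : ℝ) ^ ((s : ℤ) - ↑r - ↑u) *
          (((p : ℤ) + 2 - ↑s + ↑r : ℤ) : ℝ) ^ (j - u) * (k : ℝ) ^ u * C8 s r p n w /
          ((s - r).factorial : ℝ)) * (d : ℝ) ^ ((w : ℝ) + α - 1 - u))
      = ((zchoose ((x : ℤ) + 1 - n - ↑k + ↑r) r * (r.choose n : ℝ)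
            - zchoose ((x : ℤ) + 2 - n - ↑k + ↑r) (r + 1) * ((r + 1).choose n : ℝ))
          * C8 s r p n w / ((s - r).factorial : ℝ)) *
        ((stirling1 (s - r) j : ℝ) * (j.choose u : ℝ) * (-1 : ℝ) ^ ((s : ℤ) - ↑r - ↑u) *
          (((p : ℤ) + 2 - ↑s + ↑r : ℤ) : ℝ) ^ (j - u) * (k : ℝ) ^ u *
          (d : ℝ) ^ ((w : ℝ) + α - 1 - u)) := by
    intro j _ u _
    ring
  rw [Finset.sum_congr rfl fun j hj => Finset.sum_congr rfl fun u hu => hcongr j hj u hu]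
  simp only [← Finset.mul_sum]
  rw [inner_eval s r p w k d α hr hdpos hdk hkd]
  field_simp

lemma biject (α : ℝ) (s x p w r n : ℕ) (hn : n ≤ r + 1) :
    ∑ k ∈ Finset.Icc 1 (x + 1), ∑ d ∈ k.divisors.filter (fun d => d ≤ k / (p + 2)),
        (zchoose ((x : ℤ) + 1 - n - k + r) r * (r.choose n : ℝ)
          - zchoose ((x : ℤ) + 2 - n - k + r) (r + 1) * ((r + 1).choose n : ℝ))
          * C8 s r p n w * (d : ℝ) ^ ((w : ℝ) + α - 1)
          * ((s - r + (k / d - (p + 2))).choose (s - r) : ℝ)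
      = ∑ i ∈ Finset.Icc 1 (x + 1), ∑ t ∈ Finset.range (x + 1),
          if (p + 2) * i + n - 1 + i * t ≤ x then Eker α s x p w r n i t else 0 := by
  -- Step 1: rewrite each (k, d) summand as an `if` of the kernel.
  have hstep : ∀ k ∈ Finset.Icc 1 (x + 1), ∀ d ∈ k.divisors.filter (fun d => d ≤ k / (p + 2)),
      (zchoose ((x : ℤ) + 1 - n - k + r) r * (r.choose n : ℝ)
          - zchoose ((x : ℤ) + 2 - n - k + r) (r + 1) * ((r + 1).choose n : ℝ))
          * C8 s r p n w * (d : ℝ) ^ ((w : ℝ) + α - 1)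
          * ((s - r + (k / d - (p + 2))).choose (s - r) : ℝ)
        = if n + k ≤ x + 1 then Eker α s x p w r n d (k / d - (p + 2)) else 0 := by
    intro k hk d hd
    simp only [Finset.mem_Icc] at hk
    simp only [Finset.mem_filter, Nat.mem_divisors] at hd
    obtain ⟨⟨hdk, hk0⟩, hdle⟩ := hd
    have hdpos : 0 < d := Nat.pos_of_dvd_of_pos hdk (Nat.pos_of_ne_zero hk0)
    have hkd : p + 2 ≤ k / d := by
      rw [Nat.le_div_iff_mul_le hdpos]
      calc (p + 2) * d = d * (p + 2) := by ring
      _ ≤ k := (Nat.le_div_iff_mul_le (by omega : 0 < p + 2)).mp hdle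
    have hQk : d * (k / d) = k := Nat.mul_div_cancel' hdk
    set t := k / d - (p + 2) with hT
    have hexp : d * (t + (p + 2)) = d * t + (p + 2) * d := by ring
    have hkk : k = d * t + (p + 2) * d := by
      have h1 : t + (p + 2) = k / d := by omega
      calc k = d * (k / d) := hQk.symm
      _ = d * (t + (p + 2)) := by rw [h1]
      _ = d * t + (p + 2) * d := by ring
    have h2d : p + 2 ≤ (p + 2) * d := Nat.le_mul_of_pos_right _ hdpos
    by_cases hcond : n + k ≤ x + 1
    · rw [if_pos hcond]
      have hz1 : (0 : ℤ) ≤ (x : ℤ) + 1 - n - k + r := by omega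
      have hz2 : (0 : ℤ) ≤ (x : ℤ) + 2 - n - k + r := by omega
      rw [zchoose_of_nonneg hz1, zchoose_of_nonneg hz2]
      unfold Eker
      have hE : (d : ℝ) ^ ((w : ℝ) + α - 1) = (d : ℝ) ^ (α - 1) * (d : ℝ) ^ w := by
        rw [show (w : ℝ) + α - 1 = (w : ℝ) + (α - 1) by ring,
          Real.rpow_add (by exact_mod_cast hdpos), Real.rpow_natCast]
        ring
      have hN : x - ((p + 2) * d + n - 1) - d * t = x + 1 - n - k := by omega
      have ht1 : ((x : ℤ) + 1 - n - k + r).toNat = r + (x + 1 - n - k) := by omega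
      have ht2 : ((x : ℤ) + 2 - n - k + r).toNat = r + 1 + (x + 1 - n - k) := by omega
      rw [hE, hN, ht1, ht2]
      ring
    · rw [if_neg hcond]
      have hbr : zchoose ((x : ℤ) + 1 - n - k + r) r * (r.choose n : ℝ)
          - zchoose ((x : ℤ) + 2 - n - k + r) (r + 1) * ((r + 1).choose n : ℝ) = 0 := by
        have hkx : k ≤ x + 1 := hk.2
        by_cases hnr : n ≤ r
        · have hzz1 : zchoose ((x : ℤ) + 1 - n - k + r) r = 0 :=
            zchoose_eq_zero (by omega) (by omega)
          have hzz2 : zchoose ((x : ℤ) + 2 - n - k + r) (r + 1) = 0 :=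
            zchoose_eq_zero (by omega) (by omega)
          rw [hzz1, hzz2]
          ring
        · have hnr1 : n = r + 1 := by omega
          have hzz2 : zchoose ((x : ℤ) + 2 - n - k + r) (r + 1) = 0 :=
            zchoose_eq_zero (by omega) (by omega)
          have hch : (r.choose n : ℝ) = 0 := by
            rw [Nat.choose_eq_zero_of_lt (by omega)]
            simp
          rw [hzz2, hch]
          ring
      rw [hbr]
      ring
  rw [Finset.sum_congr rfl fun k hk => Finset.sum_congr rfl (hstep k hk)]
  -- Step 2: flatten and biject.
  rw [Finset.sum_sigma']
  have hflat : ∑ i ∈ Finset.Icc 1 (x + 1), ∑ t ∈ Finset.range (x + 1),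
      (if (p + 2) * i + n - 1 + i * t ≤ x then Eker α s x p w r n i t else 0)
      = ∑ z ∈ (Finset.Icc 1 (x + 1) ×ˢ Finset.range (x + 1)),
          (if (p + 2) * z.1 + n - 1 + z.1 * z.2 ≤ x then Eker α s x p w r n z.1 z.2 else 0) := by
    rw [Finset.sum_product]
  rw [hflat, ← Finset.sum_filter, ← Finset.sum_filter]
  refine Finset.sum_nbij' (fun q => (q.2, q.1 / q.2 - (p + 2)))
    (fun z => ⟨z.1 * (z.2 + (p + 2)), z.1⟩) ?_ ?_ ?_ ?_ ?_
  · rintro ⟨k, d⟩ hq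
    simp only [Finset.mem_filter, Finset.mem_sigma, Finset.mem_Icc, Nat.mem_divisors,
      Finset.mem_product, Finset.mem_range] at hq ⊢
    obtain ⟨⟨⟨hk1, hk2⟩, ⟨hdk, hk0⟩, hdle⟩, hcond⟩ := hq
    have hdpos : 0 < d := Nat.pos_of_dvd_of_pos hdk (Nat.pos_of_ne_zero hk0)
    have hdlek : d ≤ k := Nat.le_of_dvd (Nat.pos_of_ne_zero hk0) hdk
    have hkd : p + 2 ≤ k / d := by
      rw [Nat.le_div_iff_mul_le hdpos]
      calc (p + 2) * d = d * (p + 2) := by ring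
      _ ≤ k := (Nat.le_div_iff_mul_le (by omega : 0 < p + 2)).mp hdle
    have hQk : d * (k / d) = k := Nat.mul_div_cancel' hdk
    have hQle : k / d ≤ k := Nat.div_le_self k d
    have hexp : d * ((k / d - (p + 2)) + (p + 2)) = d * (k / d - (p + 2)) + (p + 2) * d := by
      ring
    have hkk : k = d * (k / d - (p + 2)) + (p + 2) * d := by
      have h1 : (k / d - (p + 2)) + (p + 2) = k / d := by omega
      calc k = d * (k / d) := hQk.symm
      _ = d * ((k / d - (p + 2)) + (p + 2)) := by rw [h1]
      _ = d * (k / d - (p + 2)) + (p + 2) * d := by ring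
    have h2d : p + 2 ≤ (p + 2) * d := Nat.le_mul_of_pos_right _ hdpos
    refine ⟨⟨⟨hdpos, by omega⟩, by omega⟩, by omega⟩
  · rintro ⟨i, t⟩ hz
    simp only [Finset.mem_filter, Finset.mem_sigma, Finset.mem_Icc, Nat.mem_divisors,
      Finset.mem_product, Finset.mem_range] at hz ⊢
    obtain ⟨⟨⟨hi1, hi2⟩, ht⟩, hcond⟩ := hz
    have hexp : i * (t + (p + 2)) = i * t + (p + 2) * i := by ring
    have h2i : p + 2 ≤ (p + 2) * i := Nat.le_mul_of_pos_right _ (by omega)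
    have hkpos : 0 < i * (t + (p + 2)) := Nat.mul_pos (by omega) (by omega)
    refine ⟨⟨⟨by omega, by omega⟩, ⟨dvd_mul_right i _, by omega⟩, ?_⟩, by omega⟩
    · rw [Nat.le_div_iff_mul_le (by omega : 0 < p + 2)]
      calc i * (p + 2) ≤ i * (t + (p + 2)) := Nat.mul_le_mul_left i (by omega)
      _ = i * (t + (p + 2)) := rfl
  · rintro ⟨k, d⟩ hq
    simp only [Finset.mem_filter, Finset.mem_sigma, Finset.mem_Icc, Nat.mem_divisors] at hq
    obtain ⟨⟨⟨hk1, hk2⟩, ⟨hdk, hk0⟩, hdle⟩, hcond⟩ := hq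
    have hdpos : 0 < d := Nat.pos_of_dvd_of_pos hdk (Nat.pos_of_ne_zero hk0)
    have hkd : p + 2 ≤ k / d := by
      rw [Nat.le_div_iff_mul_le hdpos]
      calc (p + 2) * d = d * (p + 2) := by ring
      _ ≤ k := (Nat.le_div_iff_mul_le (by omega : 0 < p + 2)).mp hdle
    have hQk : d * (k / d) = k := Nat.mul_div_cancel' hdk
    have hfst : d * ((k / d - (p + 2)) + (p + 2)) = k := by
      rw [show (k / d - (p + 2)) + (p + 2) = k / d by omega, hQk]
    simp [hfst]
  · rintro ⟨i, t⟩ hz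
    have hi1 : 0 < i := by
      simp only [Finset.mem_filter, Finset.mem_product, Finset.mem_Icc] at hz
      omega
    have : i * (t + (p + 2)) / i = t + (p + 2) := Nat.mul_div_cancel_left _ hi1
    simp [this]
  · rintro ⟨k, d⟩ _
    rfl

lemma reorder_uwk {U W K : Finset ℕ} (f : ℕ → ℕ → ℕ → ℝ) :
    ∑ u ∈ U, ∑ w ∈ W, ∑ k ∈ K, f u w k = ∑ w ∈ W, ∑ k ∈ K, ∑ u ∈ U, f u w k :=
  calc ∑ u ∈ U, ∑ w ∈ W, ∑ k ∈ K, f u w k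
      = ∑ w ∈ W, ∑ u ∈ U, ∑ k ∈ K, f u w k := Finset.sum_comm
    _ = ∑ w ∈ W, ∑ k ∈ K, ∑ u ∈ U, f u w k :=
        Finset.sum_congr rfl fun _ _ => Finset.sum_comm

lemma reorder_krn {K R : Finset ℕ} {N : ℕ → Finset ℕ} {D : ℕ → Finset ℕ}
    (f : ℕ → ℕ → ℕ → ℕ → ℝ) :
    ∑ k ∈ K, ∑ r ∈ R, ∑ n ∈ N r, ∑ d ∈ D k, f k r n d
      = ∑ r ∈ R, ∑ n ∈ N r, ∑ k ∈ K, ∑ d ∈ D k, f k r n d :=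
  calc ∑ k ∈ K, ∑ r ∈ R, ∑ n ∈ N r, ∑ d ∈ D k, f k r n d
      = ∑ r ∈ R, ∑ k ∈ K, ∑ n ∈ N r, ∑ d ∈ D k, f k r n d := Finset.sum_comm
    _ = ∑ r ∈ R, ∑ n ∈ N r, ∑ k ∈ K, ∑ d ∈ D k, f k r n d :=
        Finset.sum_congr rfl fun _ _ => Finset.sum_comm

set_option maxHeartbeats 2000000 in
/-- Theorem, part (ii): expansion of `S_{8,s,x}^{(α)}` by the
bounded-divisor sum functions `σ_{β,m}(n)`. -/
theorem S8_eq_bounded_divisor_sums (α : ℝ) (hα : 0 ≤ α) (s x : ℕ)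
    (hs : 1 ≤ s) (hx : 1 ≤ x) :
    S8c α s x =
      ∑ p ∈ Finset.range (s + 1), ∑ u ∈ Finset.range (s + 1),
        ∑ w ∈ Finset.range (s + 1), ∑ k ∈ Finset.Icc 1 (x + 1),
          (C82 s x k w p u - C83 s x k w p u) *
            sigmaB ((w : ℝ) + α - 1 - u) (p + 2) k := by
  rw [LHS_reduce]
  refine Finset.sum_congr rfl fun p _ => ?_
  conv_rhs => rw [reorder_uwk]
  refine Finset.sum_congr rfl fun w _ => ?_
  conv_rhs => rw [Finset.sum_congr rfl fun k _ => per_k α s x p w k]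
  conv_rhs => rw [reorder_krn]
  refine (Finset.sum_congr rfl fun r _ => Finset.sum_congr rfl fun n hn => ?_).symm
  have hn' : n ≤ r + 1 := by
    simp only [Finset.mem_range, Nat.lt_succ_iff] at hn
    omega
  exact biject α s x p w r n hn'
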